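/- The lattice Cll(X) of local clones on a countably infinite set X does not embed as a lattice into the clone lattice Cl(A) over any finite set A; i.e., for no finite set A is there an injective map from Cll(X) to Cl(A) preserving binary meets and joins. -/

import Mathlib

/-- A finitary operation on `X`: an `(n+1)`-ary function `X^(n+1) → X` (arities are ≥ 1). -/
abbrev FinOp (X : Type) := Σ n : ℕ, (Fin (n + 1) → X) → X

/-- A finitary relation on `X`: an `(m+1)`-ary relation `ρ ⊆ X^(m+1)` (arities are ≥ 1). -/
abbrev FinRel (X : Type) := Σ m : ℕ, Set (Fin (m + 1) → X)

variable {X : Type}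

/-- `C` is a clone: it contains all projections and is closed under composition. -/
def IsClone (C : Set (FinOp X)) : Prop :=
  (∀ (n : ℕ) (k : Fin (n + 1)), (⟨n, fun x => x k⟩ : FinOp X) ∈ C) ∧
  (∀ (n m : ℕ) (f : (Fin (n + 1) → X) → X) (g : Fin (n + 1) → (Fin (m + 1) → X) → X),
    (⟨n, f⟩ : FinOp X) ∈ C → (∀ i, (⟨m, g i⟩ : FinOp X) ∈ C) →
    (⟨m, fun x => f fun i => g i x⟩ : FinOp X) ∈ C)

/-- `C` is a local clone: a clone each of whose `n`-ary fragments is closed in the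
product topology on `X^(X^n)`, where `X` carries the discrete topology. -/
def IsLocalClone (C : Set (FinOp X)) : Prop :=
  IsClone C ∧
  ∀ n : ℕ,
    letI : TopologicalSpace X := ⊥
    IsClosed {f : (Fin (n + 1) → X) → X | (⟨n, f⟩ : FinOp X) ∈ C}

/-- The smallest local clone containing `F` (the local clone generated by `F`). -/
def cllClosure (F : Set (FinOp X)) : Set (FinOp X) :=
  ⋂₀ {C : Set (FinOp X) | IsLocalClone C ∧ F ⊆ C}

/-- `f` preserves the relation `ρ`. -/
def Preserves {n m : ℕ} (f : (Fin (n + 1) → X) → X) (ρ : Set (Fin (m + 1) → X)) : Prop :=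
  ∀ r : Fin (n + 1) → Fin (m + 1) → X, (∀ i, r i ∈ ρ) → (fun j => f fun i => r i j) ∈ ρ

/-- `Pol R`: all finitary operations preserving every relation in `R`. -/
def Polymorphisms (R : Set (FinRel X)) : Set (FinOp X) :=
  {f | ∀ ρ ∈ R, Preserves f.2 ρ.2}

/-- `Inv F`: all finitary relations invariant under every operation in `F`. -/
def Invariants (F : Set (FinOp X)) : Set (FinRel X) :=
  {ρ | ∀ f ∈ F, Preserves f.2 ρ.2}

/-- The clone of projections. -/
def projClone (X : Type) : Set (FinOp X) :=
  {f | ∃ k : Fin (f.1 + 1), f.2 = fun x => x k}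

/-- The clone generated by a set of finitary operations. -/
def cloneClosure {X : Type} (F : Set (FinOp X)) : Set (FinOp X) :=
  ⋂₀ {C : Set (FinOp X) | IsClone C ∧ F ⊆ C}

namespace NoEmbed

/-- the segment `[S m, S (m+1), ..., S (m+k-1)]`. -/
def seg (S : ℕ → Bool) : ℕ → ℕ → List Bool
  | _, 0 => []
  | m, (k+1) => S m :: seg S (m+1) k

lemma seg_length (S : ℕ → Bool) : ∀ k m, (seg S m k).length = k := by
  intro k
  induction k with
  | zero => intro m; rfl
  | succ k ih => intro m; simp [seg, ih]

/-- the unary operation appending the bit `S |w|` to `w`. -/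
def fS (e : X ≃ List Bool) (S : ℕ → Bool) : X → X :=
  fun x => e.symm (e x ++ [S (e x).length])

lemma fS_iter (e : X ≃ List Bool) (S : ℕ → Bool) :
    ∀ (k : ℕ) (x : X), e ((fS e S)^[k] x) = e x ++ seg S (e x).length k := by
  intro k
  induction k with
  | zero => intro x; simp [seg]
  | succ k ih =>
    intro x
    rw [Function.iterate_succ_apply, ih]
    have h1 : e (fS e S x) = e x ++ [S (e x).length] := by
      simp [fS]
    rw [h1]
    simp only [List.length_append, List.length_singleton]
    rw [List.append_assoc, List.singleton_append]
    rfl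

lemma fS_iter_length (e : X ≃ List Bool) (S : ℕ → Bool) (k : ℕ) (x : X) :
    (e ((fS e S)^[k] x)).length = (e x).length + k := by
  rw [fS_iter]; simp [seg_length]

lemma fS_injective (e : X ≃ List Bool) (S : ℕ → Bool) : Function.Injective (fS e S) := by
  intro x y h
  have h2 : e x ++ [S (e x).length] = e y ++ [S (e y).length] := e.symm.injective h
  have hl : (e x).length = (e y).length := by
    have := congrArg List.length h2
    simpa using this
  have := (List.append_inj h2 hl).1
  exact e.injective this

lemma fS_iter_injective (e : X ≃ List Bool) (S : ℕ → Bool) (k : ℕ) :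
    Function.Injective ((fS e S)^[k]) :=
  (fS_injective e S).iterate k

/-- if two iterates agree as functions, the exponents agree, and if positive, the
parameters agree. -/
lemma fS_iter_eq (e : X ≃ List Bool) (S T : ℕ → Bool) (k l : ℕ)
    (h : ∀ x, (fS e S)^[k] x = (fS e T)^[l] x) : k = l ∧ (1 ≤ k → S = T) := by
  have hk : k = l := by
    have := congrArg (fun z => (e z).length) (h (e.symm []))
    try simp only at this
    rw [fS_iter_length, fS_iter_length] at this
    simpa using this
  subst hk
  refine ⟨rfl, fun hk1 => ?_⟩
  funext m
  have hx := h (e.symm (List.replicate m true))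
  have := congrArg e hx
  rw [fS_iter, fS_iter] at this
  simp only [Equiv.apply_symm_apply, List.length_replicate] at this
  have hseg : seg S m k = seg T m k := List.append_cancel_left this
  obtain ⟨k', rfl⟩ : ∃ k', k = k' + 1 := ⟨k - 1, by omega⟩
  simpa [seg] using congrArg (fun L => L.head?) hseg

/-- The local clone of all operations `x ↦ (fS e S)^[k] (x j)`. -/
def Cs (e : X ≃ List Bool) (S : ℕ → Bool) : Set (FinOp X) :=
  {F | ∃ (k : ℕ) (j : Fin (F.1 + 1)), F.2 = fun x => (fS e S)^[k] (x j)}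

/-- The "projection" members. -/
def P0 (X : Type) : Set (FinOp X) :=
  {F | ∃ j : Fin (F.1 + 1), F.2 = fun x => x j}

lemma Cs_isClone (e : X ≃ List Bool) (S : ℕ → Bool) : IsClone (Cs e S) := by
  constructor
  · intro n k
    exact ⟨0, k, rfl⟩
  · rintro n m f g ⟨k, j, hf⟩ hg
    obtain ⟨k', j', hg'⟩ := hg j
    have hf' : f = fun x => (fS e S)^[k] (x j) := hf
    have hg'' : g j = fun x => (fS e S)^[k'] (x j') := hg'
    refine ⟨k + k', j', ?_⟩
    show (fun x => f fun i => g i x) = fun x => (fS e S)^[k + k'] (x j')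
    funext x
    simp only [hf', hg'', Function.iterate_add_apply]

lemma Cs_frag_closed (e : X ≃ List Bool) (S : ℕ → Bool) (n : ℕ) :
    letI : TopologicalSpace X := ⊥
    IsClosed {f : (Fin (n + 1) → X) → X |
      ∃ (k : ℕ) (j : Fin (n + 1)), f = fun x => (fS e S)^[k] (x j)} := by
  letI : TopologicalSpace X := ⊥
  haveI : DiscreteTopology X := ⟨rfl⟩
  apply isClosed_of_closure_subset
  intro f hf
  set p0 : Fin (n + 1) → X := fun _ => e.symm [] with hp0
  set q : Fin (n + 1) → X := fun i => e.symm (List.replicate ((i : ℕ) + 1) true) with hq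
  have hqinj : Function.Injective q := by
    intro i i' h
    have := congrArg (fun z => (e z).length) h
    simp only [hq, Equiv.apply_symm_apply, List.length_replicate] at this
    exact Fin.ext (by omega)
  have hopen : ∀ (pts : List (Fin (n + 1) → X)),
      IsOpen {g : (Fin (n + 1) → X) → X | ∀ p ∈ pts, g p = f p} := by
    intro pts
    induction pts with
    | nil => simpa using isOpen_univ
    | cons p ps ih =>
      have h1 : IsOpen {g : (Fin (n + 1) → X) → X | g p = f p} := by
        have hset : {g : (Fin (n + 1) → X) → X | g p = f p}
            = (fun g : (Fin (n + 1) → X) → X => g p) ⁻¹' {f p} := rfl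
        rw [hset]
        exact (isOpen_discrete _).preimage (continuous_apply p)
      have := h1.inter ih
      convert this using 1
      ext g
      simp [Set.mem_inter_iff]
  -- first: determine k0, j0
  obtain ⟨g, hg, k0, j0, hgeq⟩ :=
    mem_closure_iff.mp hf _ (hopen [p0, q]) (by simp)
  have hg0 : f p0 = (fS e S)^[k0] (e.symm []) := by
    have := hg p0 (by simp); rw [hgeq] at this; exact this.symm
  have hgq : f q = (fS e S)^[k0] (q j0) := by
    have := hg q (by simp); rw [hgeq] at this; exact this.symm
  refine ⟨k0, j0, funext fun x => ?_⟩
  obtain ⟨g', hg', k, j, hgeq'⟩ :=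
    mem_closure_iff.mp hf _ (hopen [p0, q, x]) (by simp)
  have h0 : f p0 = (fS e S)^[k] (e.symm []) := by
    have := hg' p0 (by simp); rw [hgeq'] at this; exact this.symm
  have hq' : f q = (fS e S)^[k] (q j) := by
    have := hg' q (by simp); rw [hgeq'] at this; exact this.symm
  have hx : f x = (fS e S)^[k] (x j) := by
    have := hg' x (by simp); rw [hgeq'] at this; exact this.symm
  -- k = k0
  have hkk : k = k0 := by
    have := congrArg (fun z => (e z).length) (h0.symm.trans hg0)
    try simp only at this
    rw [fS_iter_length, fS_iter_length] at this
    omega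
  subst hkk
  -- j = j0
  have hjj : j = j0 := by
    have := fS_iter_injective e S k (hq'.symm.trans hgq)
    exact hqinj this
  subst hjj
  exact hx

lemma Cs_isLocalClone (e : X ≃ List Bool) (S : ℕ → Bool) : IsLocalClone (Cs e S) := by
  refine ⟨Cs_isClone e S, fun n => ?_⟩
  exact Cs_frag_closed e S n

lemma Cs_inter (e : X ≃ List Bool) {S T : ℕ → Bool} (hST : S ≠ T) :
    Cs e S ∩ Cs e T = P0 X := by
  ext F
  constructor
  · rintro ⟨⟨k, j, hf⟩, ⟨l, j', hf'⟩⟩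
    obtain ⟨n, f⟩ := F
    have hf1 : f = fun x => (fS e S)^[k] (x j) := hf
    have hf2 : f = fun x => (fS e T)^[l] (x j') := hf'
    by_cases hjj : j = j'
    · subst hjj
      have heq : ∀ u : X, (fS e S)^[k] u = (fS e T)^[l] u := fun u =>
        congrFun (hf1.symm.trans hf2) (fun _ => u)
      obtain ⟨hkl, hST'⟩ := fS_iter_eq e S T k l heq
      have hk0 : k = 0 := by
        by_contra hk
        exact hST (hST' (by omega))
      subst hk0
      refine ⟨j, ?_⟩
      show f = fun x => x j
      rw [hf1]
      funext x
      simp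
    · exfalso
      have huu : e.symm ([] : List Bool) ≠ e.symm [true] := by
        intro h
        simpa using e.symm.injective h
      have h1 : (fS e S)^[k] (e.symm []) = (fS e T)^[l] (e.symm []) :=
        congrFun (hf1.symm.trans hf2) (fun _ => e.symm [])
      have h2 : (fS e S)^[k] (Function.update (fun _ : Fin (n + 1) => e.symm []) j
            (e.symm [true]) j)
          = (fS e T)^[l] (Function.update (fun _ : Fin (n + 1) => e.symm []) j
            (e.symm [true]) j') :=
        congrFun (hf1.symm.trans hf2) _
      rw [Function.update_self, Function.update_of_ne (fun h => hjj h.symm)] at h2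
      have : (fS e S)^[k] (e.symm []) = (fS e S)^[k] (e.symm [true]) := by
        rw [h1, ← h2]
      exact huu (fS_iter_injective e S k this)
  · rintro ⟨j, hf⟩
    exact ⟨⟨0, j, hf⟩, ⟨0, j, hf⟩⟩

lemma Cs_injective (e : X ≃ List Bool) : Function.Injective (Cs e) := by
  intro S T h
  by_contra hST
  have hmem : (⟨0, fun x => fS e S (x 0)⟩ : FinOp X) ∈ Cs e S := by
    exact ⟨1, 0, by funext x; simp⟩
  rw [h] at hmem
  obtain ⟨k, j, hf⟩ := hmem
  have heq : ∀ u : X, (fS e S)^[1] u = (fS e T)^[k] u := fun u => by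
    rw [Function.iterate_one]
    exact congrFun hf (fun _ => u)
  obtain ⟨-, hS⟩ := fS_iter_eq e S T 1 k heq
  exact hST (hS le_rfl)

end NoEmbed

private theorem aux_no_embedding
    (X : Type) [Countable X] [Infinite X] (A : Type) [Finite A]
    (σ : Set (FinOp X) → Set (FinOp A))
    (hinj : Set.InjOn σ {C : Set (FinOp X) | IsLocalClone C})
    (hmeet : ∀ C D : Set (FinOp X), IsLocalClone C → IsLocalClone D →
      σ (C ∩ D) = σ C ∩ σ D) : False := by
  classical
  obtain ⟨e⟩ : Nonempty (X ≃ List Bool) := by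
    haveI : Encodable X := Encodable.ofCountable X
    haveI : Denumerable X := Denumerable.ofEncodableOfInfinite X
    haveI : Denumerable (List Bool) := Denumerable.ofEncodableOfInfinite (List Bool)
    exact ⟨(Denumerable.eqv X).trans (Denumerable.eqv (List Bool)).symm⟩
  set B : Set (FinOp A) := σ (NoEmbed.P0 X) with hB
  have key : ∀ S T : ℕ → Bool, S ≠ T → σ (NoEmbed.Cs e S) ∩ σ (NoEmbed.Cs e T) = B := by
    intro S T hST
    rw [← hmeet _ _ (NoEmbed.Cs_isLocalClone e S) (NoEmbed.Cs_isLocalClone e T),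
      NoEmbed.Cs_inter e hST]
  -- build an injection (ℕ → Bool) → FinOp A ⊕ Unit
  have hψ : ∃ ψ : (ℕ → Bool) → (FinOp A ⊕ Unit), Function.Injective ψ := by
    refine ⟨fun S => if h : (σ (NoEmbed.Cs e S) \ B).Nonempty then Sum.inl h.choose
      else Sum.inr (), ?_⟩
    intro S T h
    dsimp only at h
    by_contra hST
    by_cases h1 : (σ (NoEmbed.Cs e S) \ B).Nonempty <;>
      by_cases h2 : (σ (NoEmbed.Cs e T) \ B).Nonempty
    · rw [dif_pos h1, dif_pos h2] at h
      have hx := Sum.inl.inj h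
      have hxS := h1.choose_spec
      have hxT := h2.choose_spec
      rw [hx] at hxS
      have hmem : h2.choose ∈ σ (NoEmbed.Cs e S) ∩ σ (NoEmbed.Cs e T) := ⟨hxS.1, hxT.1⟩
      rw [key S T hST] at hmem
      exact hxT.2 hmem
    · rw [dif_pos h1, dif_neg h2] at h; exact Sum.inl_ne_inr h
    · rw [dif_neg h1, dif_pos h2] at h; exact Sum.inr_ne_inl h
    · -- both σ C ⊆ B, hence both = B, contradicting injectivity
      have hS : σ (NoEmbed.Cs e S) = B := by
        apply Set.Subset.antisymm
        · intro x hx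
          by_contra hxB
          exact h1 ⟨x, hx, hxB⟩
        · rw [← key S T hST]; exact Set.inter_subset_left
      have hT : σ (NoEmbed.Cs e T) = B := by
        apply Set.Subset.antisymm
        · intro x hx
          by_contra hxB
          exact h2 ⟨x, hx, hxB⟩
        · rw [← key S T hST]; exact Set.inter_subset_right
      have : NoEmbed.Cs e S = NoEmbed.Cs e T :=
        hinj (NoEmbed.Cs_isLocalClone e S) (NoEmbed.Cs_isLocalClone e T) (hS.trans hT.symm)
      exact hST (NoEmbed.Cs_injective e this)
  obtain ⟨ψ, hψinj⟩ := hψ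
  haveI : Countable (ℕ → Bool) := hψinj.countable
  obtain ⟨i, hi⟩ := exists_injective_nat (ℕ → Bool)
  have : ¬ Function.Injective (fun s : Set ℕ => i (fun n => decide (n ∈ s))) :=
    Function.cantor_injective _
  apply this
  intro s t hst
  have := hi hst
  ext n
  have := congrFun this n
  rwa [decide_eq_decide] at this

/-- The lattice of local clones on a countably infinite set `X` does not embed
as a lattice into the clone lattice over any finite set `A`: there is no injective map from
local clones on `X` to clones on `A` preserving binary meets (intersections) and binary joins
(generated (local) clones of unions). -/
theorem no_lattice_embedding_into_finite_cloneLattice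
    (X : Type) [Countable X] [Infinite X] (A : Type) [Finite A] :
    ¬ ∃ σ : Set (FinOp X) → Set (FinOp A),
        (∀ C : Set (FinOp X), IsLocalClone C → IsClone (σ C)) ∧
        Set.InjOn σ {C : Set (FinOp X) | IsLocalClone C} ∧
        (∀ C D : Set (FinOp X), IsLocalClone C → IsLocalClone D →
          σ (C ∩ D) = σ C ∩ σ D ∧
          σ (cllClosure (C ∪ D)) = cloneClosure (σ C ∪ σ D)) := by
  rintro ⟨σ, -, hinj, hlat⟩
  exact aux_no_embedding X A σ hinj (fun C D hC hD => (hlat C D hC hD).1)
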